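/- Let X₁,…,Xₙ, Y₁,…,Yₙ be i.i.d. standard normal random variables. Then for every λσ > 0 and n ≥ 1, P[∑ₖ |XₖYₖ| ≥ nλσ] ≤ exp{−n·sup_{κ∈(0,1)} (κλσ − log F(κ))}, where F(κ) = (4/√(2π))∫₀^∞ exp{−(1/2)(1−κ²)x²}Φ(κx) dx. -/

import Mathlib

open Real MeasureTheory ProbabilityTheory Set Topology
open scoped ENNReal NNReal

/-- The standard normal cumulative distribution function. -/
noncomputable def stdNormalCDF (x : ℝ) : ℝ :=
  ∫ t in Set.Iic x, (1 / Real.sqrt (2 * π)) * Real.exp (-t ^ 2 / 2)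

/-- `F(κ) = (4/√(2π)) ∫₀^∞ exp{−(1/2)(1−κ²)x²} Φ(κx) dx`. -/
noncomputable def Fkappa (κ : ℝ) : ℝ :=
  (4 / Real.sqrt (2 * π)) * ∫ x in Set.Ioi (0:ℝ),
    Real.exp (-(1/2) * (1 - κ ^ 2) * x ^ 2) * stdNormalCDF (κ * x)

lemma integrable_gauss_half : Integrable (fun t : ℝ => Real.exp (-t ^ 2 / 2)) := by
  have := integrable_exp_neg_mul_sq (b := (1/2 : ℝ)) (by norm_num)
  refine this.congr (Filter.Eventually.of_forall fun t => ?_)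
  ring_nf

lemma sqrtpi_pos : 0 < Real.sqrt (2 * π) := Real.sqrt_pos.2 (by positivity)

lemma stdNormalCDF_eq (c : ℝ) :
    Real.sqrt (2 * π) * stdNormalCDF c = ∫ t in Iic c, Real.exp (-t ^ 2 / 2) := by
  rw [stdNormalCDF, integral_const_mul, ← mul_assoc, mul_one_div, div_self sqrtpi_pos.ne',
    one_mul]

lemma stdNormalCDF_nonneg (c : ℝ) : 0 ≤ stdNormalCDF c :=
  setIntegral_nonneg measurableSet_Iic fun t _ => by positivity

lemma stdNormalCDF_mono : Monotone stdNormalCDF := by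
  intro c d hcd
  have h := integrable_gauss_half
  refine setIntegral_mono_set ((h.const_mul _).integrableOn)
    (Filter.Eventually.of_forall fun t => by positivity)
    (Filter.Eventually.of_forall (Iic_subset_Iic.2 hcd))

lemma integral_gauss_half : ∫ t : ℝ, Real.exp (-t ^ 2 / 2) = Real.sqrt (2 * π) := by
  have := integral_gaussian (1/2 : ℝ)
  rw [div_div_eq_mul_div, div_one, mul_comm] at this
  rw [← this]
  congr 1; funext t; ring_nf

lemma stdNormalCDF_le_one (c : ℝ) : stdNormalCDF c ≤ 1 := by
  have h : Real.sqrt (2 * π) * stdNormalCDF c ≤ Real.sqrt (2 * π) * 1 := by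
    rw [stdNormalCDF_eq, mul_one, ← integral_gauss_half]
    exact setIntegral_le_integral integrable_gauss_half
      (Filter.Eventually.of_forall fun t => by positivity)
  exact le_of_mul_le_mul_left h sqrtpi_pos

lemma half_mgf (c : ℝ) :
    ∫ y in Ioi (0:ℝ), Real.exp (c * y) * Real.exp (-y ^ 2 / 2)
      = Real.exp (c ^ 2 / 2) * (Real.sqrt (2 * π) * stdNormalCDF c) := by
  have h1 : ∀ y : ℝ, Real.exp (c * y) * Real.exp (-y ^ 2 / 2)
      = Real.exp (c ^ 2 / 2) * Real.exp (-(y - c) ^ 2 / 2) := by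
    intro y; rw [← Real.exp_add, ← Real.exp_add]; ring_nf
  simp_rw [h1]
  rw [integral_const_mul]
  congr 1
  have hmp : MeasurePreserving (fun x : ℝ => x - c) volume volume := by
    refine ⟨measurable_sub_const c, ?_⟩
    simp_rw [sub_eq_add_neg]
    exact map_add_right_eq_self volume (-c)
  have hemb : MeasurableEmbedding (fun x : ℝ => x - c) :=
    (Homeomorph.subRight c).isClosedEmbedding.measurableEmbedding
  have hpre : (fun x : ℝ => x - c) ⁻¹' (Ioi (-c)) = Ioi 0 := by
      ext x; simp only [mem_preimage, mem_Ioi]; constructor <;> intro h <;> linarith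
  calc ∫ y in Ioi (0:ℝ), Real.exp (-(y - c) ^ 2 / 2)
      = ∫ y in Ioi (-c), Real.exp (-y ^ 2 / 2) := by
        rw [← hpre]
        exact hmp.setIntegral_preimage_emb hemb (fun y => Real.exp (-y ^ 2 / 2)) (Ioi (-c))
    _ = ∫ y in Iic c, Real.exp (-y ^ 2 / 2) := by
        rw [← integral_comp_neg_Iic]
        congr 1; funext y; rw [neg_pow]; norm_num
    _ = Real.sqrt (2 * π) * stdNormalCDF c := (stdNormalCDF_eq c).symm

-- density lemma
lemma gr_eq : gaussianReal 0 1 =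
    (volume : Measure ℝ).withDensity (fun x => ((gaussianPDFReal 0 1 x).toNNReal : ℝ≥0∞)) := by
  rw [gaussianReal_of_var_ne_zero _ one_ne_zero]
  rfl

lemma pdf_eq (x : ℝ) : gaussianPDFReal 0 1 x = (Real.sqrt (2 * π))⁻¹ * Real.exp (-x ^ 2 / 2) := by
  simp [gaussianPDFReal]

lemma integral_gr (g : ℝ → ℝ) (hg : Measurable g) :
    ∫ x, g x ∂(gaussianReal 0 1)
      = ∫ x, (Real.sqrt (2 * π))⁻¹ * Real.exp (-x ^ 2 / 2) * g x := by
  rw [gr_eq, integral_withDensity_eq_integral_smul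
    (measurable_gaussianPDFReal 0 1).real_toNNReal g]
  congr 1; funext x
  rw [NNReal.smul_def, smul_eq_mul, Real.coe_toNNReal _ (gaussianPDFReal_nonneg 0 1 x), pdf_eq]

lemma integrable_gr_iff (g : ℝ → ℝ) (hg : Measurable g) :
    Integrable g (gaussianReal 0 1) ↔
      Integrable (fun x => (Real.sqrt (2 * π))⁻¹ * Real.exp (-x ^ 2 / 2) * g x) := by
  rw [gr_eq, integrable_withDensity_iff_integrable_smul
    (measurable_gaussianPDFReal 0 1).real_toNNReal]
  constructor <;> intro h <;> refine h.congr (Filter.Eventually.of_forall fun x => ?_) <;>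
  · simp [NNReal.smul_def, Real.coe_toNNReal _ (gaussianPDFReal_nonneg 0 1 x), pdf_eq]
    left; positivity

lemma meas_exp_abs (c : ℝ) : Measurable fun y : ℝ => Real.exp (c * |y|) :=
  ((measurable_const.mul continuous_abs.measurable)).exp

lemma integrable_exp_abs_gr (c : ℝ) :
    Integrable (fun y => Real.exp (c * |y|)) (gaussianReal 0 1) := by
  rw [integrable_gr_iff _ (meas_exp_abs c)]
  refine Integrable.mono'
    (((integrable_exp_neg_mul_sq (b := (1/4:ℝ)) (by norm_num)).const_mul
      ((Real.sqrt (2 * π))⁻¹ * Real.exp (c ^ 2))))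
    ((by fun_prop : Measurable fun x : ℝ =>
      (Real.sqrt (2 * π))⁻¹ * Real.exp (-x ^ 2 / 2) * Real.exp (c * |x|)).aestronglyMeasurable)
    (Filter.Eventually.of_forall fun y => ?_)
  · rw [Real.norm_eq_abs, abs_of_nonneg (by positivity)]
    rw [mul_assoc, mul_assoc, ← Real.exp_add, ← Real.exp_add]
    refine mul_le_mul_of_nonneg_left (Real.exp_le_exp.2 ?_) (by positivity)
    nlinarith [sq_nonneg (c - |y| / 2), sq_abs y]

lemma abs_mgf (c : ℝ) :
    ∫ y, Real.exp (c * |y|) ∂(gaussianReal 0 1)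
      = 2 * Real.exp (c ^ 2 / 2) * stdNormalCDF c := by
  rw [integral_gr _ (meas_exp_abs c)]
  have h1 : ∀ y : ℝ, (Real.sqrt (2 * π))⁻¹ * Real.exp (-y ^ 2 / 2) * Real.exp (c * |y|)
      = (fun t => (Real.sqrt (2 * π))⁻¹ * (Real.exp (c * t) * Real.exp (-t ^ 2 / 2))) |y| := by
    intro y
    simp only
    rw [← sq_abs y]
    ring
  have h2 := integral_comp_abs
    (f := fun t => (Real.sqrt (2 * π))⁻¹ * (Real.exp (c * t) * Real.exp (-t ^ 2 / 2)))
  calc ∫ y, (Real.sqrt (2 * π))⁻¹ * Real.exp (-y ^ 2 / 2) * Real.exp (c * |y|)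
      = ∫ y, (fun t => (Real.sqrt (2 * π))⁻¹
          * (Real.exp (c * t) * Real.exp (-t ^ 2 / 2))) |y| := by
        congr 1; funext y; exact h1 y
    _ = 2 * ∫ y in Ioi (0:ℝ), (Real.sqrt (2 * π))⁻¹
          * (Real.exp (c * y) * Real.exp (-y ^ 2 / 2)) := h2
    _ = 2 * Real.exp (c ^ 2 / 2) * stdNormalCDF c := by
        rw [integral_const_mul, half_mgf]
        field_simp

lemma integrable_exp_sq_gr {b : ℝ} (hb : b < 1) :
    Integrable (fun x => Real.exp (b / 2 * x ^ 2)) (gaussianReal 0 1) := by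
  rw [integrable_gr_iff _ (by fun_prop)]
  refine (((integrable_exp_neg_mul_sq (b := (1 - b)/2) (by linarith)).const_mul
    ((Real.sqrt (2 * π))⁻¹)).congr (Filter.Eventually.of_forall fun x => ?_))
  simp only [mul_assoc, ← Real.exp_add]
  congr 2
  ring

lemma meas_prod_fun (κ : ℝ) : Measurable fun p : ℝ × ℝ => Real.exp (κ * |p.1 * p.2|) := by
  fun_prop

lemma integrable_prod_exp {κ : ℝ} (hκ : κ ∈ Ioo (0:ℝ) 1) :
    Integrable (fun p : ℝ × ℝ => Real.exp (κ * |p.1 * p.2|))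
      ((gaussianReal 0 1).prod (gaussianReal 0 1)) := by
  have hg : Integrable (fun x => Real.exp (κ / 2 * x ^ 2)) (gaussianReal 0 1) :=
    integrable_exp_sq_gr hκ.2
  refine Integrable.mono' (hg.mul_prod hg) (meas_prod_fun κ).aestronglyMeasurable
    (Filter.Eventually.of_forall fun p => ?_)
  rw [Real.norm_eq_abs, abs_of_nonneg (Real.exp_nonneg _), ← Real.exp_add]
  refine Real.exp_le_exp.2 ?_
  have h := abs_mul p.1 p.2
  nlinarith [sq_nonneg (|p.1| - |p.2|), sq_abs p.1, sq_abs p.2, abs_nonneg (p.1 * p.2),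
    hκ.1.le, abs_mul p.1 p.2]

lemma prod_mgf {κ : ℝ} (hκ : κ ∈ Ioo (0:ℝ) 1) :
    ∫ p, Real.exp (κ * |p.1 * p.2|) ∂((gaussianReal 0 1).prod (gaussianReal 0 1))
      = Fkappa κ := by
  rw [integral_prod _ (integrable_prod_exp hκ)]
  have hinner : ∀ x : ℝ, ∫ y, Real.exp (κ * |x * y|) ∂(gaussianReal 0 1)
      = 2 * Real.exp ((κ * |x|) ^ 2 / 2) * stdNormalCDF (κ * |x|) := by
    intro x
    rw [← abs_mgf (κ * |x|)]
    congr 1; funext y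
    rw [abs_mul, mul_assoc]
  simp_rw [hinner]
  rw [integral_gr _ (by
    have : Measurable stdNormalCDF := stdNormalCDF_mono.measurable
    fun_prop)]
  have h1 : ∀ x : ℝ, (Real.sqrt (2 * π))⁻¹ * Real.exp (-x ^ 2 / 2)
        * (2 * Real.exp ((κ * |x|) ^ 2 / 2) * stdNormalCDF (κ * |x|))
      = (fun t => 2 * (Real.sqrt (2 * π))⁻¹
          * (Real.exp (-(1/2) * (1 - κ ^ 2) * t ^ 2) * stdNormalCDF (κ * t))) |x| := by
    intro x
    simp only
    rw [← sq_abs x, mul_pow]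
    rw [show -(1/2) * (1 - κ ^ 2) * |x| ^ 2 = -|x| ^ 2 / 2 + κ ^ 2 * |x| ^ 2 / 2 by ring,
      Real.exp_add]
    ring
  have h2 := integral_comp_abs (f := fun t => 2 * (Real.sqrt (2 * π))⁻¹
      * (Real.exp (-(1/2) * (1 - κ ^ 2) * t ^ 2) * stdNormalCDF (κ * t)))
  calc ∫ x, (Real.sqrt (2 * π))⁻¹ * Real.exp (-x ^ 2 / 2)
        * (2 * Real.exp ((κ * |x|) ^ 2 / 2) * stdNormalCDF (κ * |x|))
      = ∫ x, (fun t => 2 * (Real.sqrt (2 * π))⁻¹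
          * (Real.exp (-(1/2) * (1 - κ ^ 2) * t ^ 2) * stdNormalCDF (κ * t))) |x| := by
        congr 1; funext x; exact h1 x
    _ = 2 * ∫ x in Ioi (0:ℝ), 2 * (Real.sqrt (2 * π))⁻¹
          * (Real.exp (-(1/2) * (1 - κ ^ 2) * x ^ 2) * stdNormalCDF (κ * x)) := h2
    _ = Fkappa κ := by
        rw [integral_const_mul, Fkappa]
        field_simp
        ring

lemma pi_map_eval {ι : Type*} [Fintype ι] {E : Type*} [MeasurableSpace E]
    (ν : Measure E) [IsProbabilityMeasure ν] (i : ι) :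
    (Measure.pi fun _ : ι => ν).map (fun ω => ω i) = ν := by
  classical
  ext s hs
  rw [Measure.map_apply (measurable_pi_apply i) hs]
  have : (fun ω : ι → E => ω i) ⁻¹' s
      = Set.pi univ (Function.update (fun _ => (univ : Set E)) i s) := by
    rw [Set.univ_pi_update_univ]
  rw [this, Measure.pi_pi]
  rw [Finset.prod_eq_single_of_mem i (Finset.mem_univ i)
    (fun j _ hj => by rw [Function.update_of_ne hj]; exact measure_univ)]
  rw [Function.update_self]

lemma iIndep_eval {ι : Type*} [Fintype ι] {E : Type*} [MeasurableSpace E]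
    (ν : Measure E) [IsProbabilityMeasure ν] :
    iIndepFun (fun (i : ι) (ω : ι → E) => ω i)
      (Measure.pi fun _ : ι => ν) := by
  classical
  rw [iIndepFun_iff_measure_inter_preimage_eq_mul]
  intro S sets hsets
  have hA : (⋂ i ∈ S, (fun ω : ι → E => ω i) ⁻¹' sets i)
      = Set.pi univ (fun i => if i ∈ S then sets i else univ) := by
    ext ω
    simp only [Set.mem_iInter, Set.mem_preimage, Set.mem_pi, Set.mem_univ, true_implies]
    constructor
    · intro h i
      by_cases hi : i ∈ S
      · simp [hi, h i hi]
      · simp [hi]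
    · intro h i hi
      have := h i
      simpa [hi] using this
  rw [hA, Measure.pi_pi]
  have : ∀ i : ι, ν (if i ∈ S then sets i else univ) = if i ∈ S then ν (sets i) else 1 := by
    intro i; split <;> simp [measure_univ]
  simp_rw [this]
  rw [Finset.prod_ite_mem Finset.univ S (fun i => ν (sets i)), Finset.univ_inter]
  refine Finset.prod_congr rfl fun i hi => ?_
  have h := congrArg (fun m : Measure E => m (sets i)) (pi_map_eval (ι := ι) ν i)
  rw [Measure.map_apply (measurable_pi_apply i) (hsets i hi)] at h
  exact h.symm

lemma Fkappa_ge_one {κ : ℝ} (hκ : κ ∈ Ioo (0:ℝ) 1) : 1 ≤ Fkappa κ := by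
  rw [← prod_mgf hκ]
  have h := integral_mono (μ := (gaussianReal 0 1).prod (gaussianReal 0 1))
    (integrable_const 1) (integrable_prod_exp hκ)
    (fun p => Real.one_le_exp (mul_nonneg hκ.1.le (abs_nonneg _)))
  simpa using h

lemma Fkappa_pos {κ : ℝ} (hκ : κ ∈ Ioo (0:ℝ) 1) : 0 < Fkappa κ :=
  lt_of_lt_of_le one_pos (Fkappa_ge_one hκ)

lemma chernoff (n : ℕ) (a : ℝ) {κ : ℝ} (hκ : κ ∈ Ioo (0:ℝ) 1) :
    ((Measure.pi fun _ : Fin n => (gaussianReal 0 1).prod (gaussianReal 0 1))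
        {ω : Fin n → ℝ × ℝ | (n : ℝ) * a ≤ ∑ k, |(ω k).1 * (ω k).2|}).toReal
      ≤ Real.exp (-(n : ℝ) * (κ * a - Real.log (Fkappa κ))) := by
  set ν : Measure (ℝ × ℝ) := (gaussianReal 0 1).prod (gaussianReal 0 1) with hν
  set P : Measure (Fin n → ℝ × ℝ) := Measure.pi fun _ => ν with hP
  set X : Fin n → (Fin n → ℝ × ℝ) → ℝ := fun i ω => |(ω i).1 * (ω i).2| with hX
  have hXm : ∀ i, Measurable (X i) := fun i =>
    (((measurable_pi_apply i).fst).mul ((measurable_pi_apply i).snd)).abs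
  have hindep : iIndepFun X P :=
    (iIndep_eval (ι := Fin n) ν).comp (fun _ => fun p : ℝ × ℝ => |p.1 * p.2|)
      (fun _ => (measurable_fst.mul measurable_snd).abs)
  have hmap : ∀ i : Fin n, P.map (fun ω => ω i) = ν := fun i => pi_map_eval (ι := Fin n) ν i
  have hmeas2 : Measurable fun p : ℝ × ℝ => Real.exp (κ * |p.1 * p.2|) := meas_prod_fun κ
  have hint : ∀ i ∈ Finset.univ, Integrable (fun ω => Real.exp (κ * X i ω)) P := by
    intro i _
    have h1 : Integrable (fun p : ℝ × ℝ => Real.exp (κ * |p.1 * p.2|))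
        (P.map (fun ω => ω i)) := by rw [hmap]; exact integrable_prod_exp hκ
    exact (integrable_map_measure (by rw [hmap]; exact hmeas2.aestronglyMeasurable)
      (measurable_pi_apply i).aemeasurable).1 h1
  have hmgf : ∀ i : Fin n, mgf (X i) P κ = Fkappa κ := by
    intro i
    have h2 := integral_map (μ := P) (φ := fun ω => ω i)
      (f := fun p : ℝ × ℝ => Real.exp (κ * |p.1 * p.2|))
      (measurable_pi_apply i).aemeasurable
      (by rw [hmap]; exact hmeas2.aestronglyMeasurable)
    rw [hmap] at h2
    rw [mgf, ← prod_mgf hκ, h2]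
  have hintsum : Integrable (fun ω => Real.exp (κ * (∑ i, X i) ω)) P :=
    hindep.integrable_exp_mul_sum hXm hint
  have hchern := measure_ge_le_exp_mul_mgf (μ := P) (X := ∑ i, X i) ((n : ℝ) * a)
    hκ.1.le hintsum
  have hset : {ω : Fin n → ℝ × ℝ | (n : ℝ) * a ≤ ∑ k, |(ω k).1 * (ω k).2|}
      = {ω : Fin n → ℝ × ℝ | (n : ℝ) * a ≤ (∑ i, X i) ω} := by
    ext ω; simp [hX, Finset.sum_apply]
  rw [hset]
  refine hchern.trans ?_
  rw [hindep.mgf_sum hXm]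
  have hprod : ∏ i : Fin n, mgf (X i) P κ = (Fkappa κ) ^ n := by
    rw [Finset.prod_congr rfl fun i _ => hmgf i, Finset.prod_const, Finset.card_univ,
      Fintype.card_fin]
  rw [hprod]
  have hF := Fkappa_pos hκ
  apply le_of_eq
  rw [← Real.exp_log (pow_pos hF n), Real.log_pow, ← Real.exp_add]
  congr 1
  push_cast
  ring


theorem stmt_6 (n : ℕ) (hn : 1 ≤ n) (a : ℝ) (ha : 0 < a) :
    (Measure.pi fun _ : Fin n => (gaussianReal 0 1).prod (gaussianReal 0 1))
        {ω : Fin n → ℝ × ℝ | (n : ℝ) * a ≤ ∑ k, |(ω k).1 * (ω k).2|}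
      ≤ ENNReal.ofReal
          (Real.exp (-(n : ℝ) * sSup {e : ℝ | ∃ κ ∈ Set.Ioo (0:ℝ) 1,
              e = κ * a - Real.log (Fkappa κ)})) := by
  set S : Set ℝ := {e : ℝ | ∃ κ ∈ Set.Ioo (0:ℝ) 1, e = κ * a - Real.log (Fkappa κ)} with hS
  set P := Measure.pi fun _ : Fin n => (gaussianReal 0 1).prod (gaussianReal 0 1) with hP
  set A := {ω : Fin n → ℝ × ℝ | (n : ℝ) * a ≤ ∑ k, |(ω k).1 * (ω k).2|} with hA
  have hne : S.Nonempty :=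
    ⟨(1/2 : ℝ) * a - Real.log (Fkappa (1/2)), ⟨1/2, by norm_num, rfl⟩⟩
  have hbdd : BddAbove S := by
    refine ⟨a, fun e he => ?_⟩
    obtain ⟨κ, hκ, rfl⟩ := he
    have h1 : 0 ≤ Real.log (Fkappa κ) := Real.log_nonneg (Fkappa_ge_one hκ)
    nlinarith [hκ.1, hκ.2, ha]
  set s := sSup S with hs
  have key : ∀ e ∈ S, (P A).toReal ≤ Real.exp (-(n : ℝ) * e) := by
    rintro e ⟨κ, hκ, rfl⟩
    exact chernoff n a hκ
  have hnpos : (0 : ℝ) < (n : ℝ) := by exact_mod_cast hn.trans_lt' zero_lt_one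
  have hc : ∀ c ∈ Iio s, (P A).toReal ≤ Real.exp (-(n : ℝ) * c) := by
    intro c hcs
    obtain ⟨e, heS, hce⟩ := exists_lt_of_lt_csSup hne hcs
    refine (key e heS).trans (Real.exp_le_exp.2 ?_)
    nlinarith
  have htend : Filter.Tendsto (fun c => Real.exp (-(n : ℝ) * c)) (𝓝[<] s)
      (𝓝 (Real.exp (-(n : ℝ) * s))) :=
    ((Real.continuous_exp.comp (continuous_const.mul continuous_id)).tendsto s).mono_left
      nhdsWithin_le_nhds
  have hfinal : (P A).toReal ≤ Real.exp (-(n : ℝ) * s) := by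
    refine ge_of_tendsto htend ?_
    filter_upwards [self_mem_nhdsWithin] with c hcs using hc c hcs
  calc P A = ENNReal.ofReal (P A).toReal := (ENNReal.ofReal_toReal (measure_ne_top P A)).symm
    _ ≤ ENNReal.ofReal (Real.exp (-(n : ℝ) * s)) := ENNReal.ofReal_le_ofReal hfinal
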